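/- Let J be an unbounded subinterval of ℝ and g : J → ℝ a locally absolutely continuous function on J with derivative g′. Assume g ∈ L^∞(J), that g′ is of locally bounded variation on J, and that there exist a constant V_J > 0 and r ∈ (0,1] such that the total variation of g′ on the interval with endpoints a and b is at most V_J·|a − b|^r for all a, b ∈ J. Then g′ ∈ L^∞(J) and ‖g′‖_{J,∞} ≤ (2^{r/(r+1)}·(r+1)/r^{r/(r+1)})·‖g‖_{J,∞}^{r/(r+1)}·V_J^{1/(r+1)}. -/

import Mathlib

open MeasureTheory Set

/-- Optimization step: if `A ≤ 2M/h + V h^r` for all `h > 0`, then `A` is bounded by the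
optimal value. -/
lemma landau_opt {M V r A : ℝ} (hM : 0 ≤ M) (hV : 0 < V) (hr0 : 0 < r)
    (hA : ∀ h : ℝ, 0 < h → A ≤ 2 * M / h + V * h ^ r) :
    A ≤ 2 ^ (r / (r + 1)) * (r + 1) / r ^ (r / (r + 1)) * M ^ (r / (r + 1)) * V ^ (1 / (r + 1)) := by
  have hr1 : (0:ℝ) < r + 1 := by linarith
  set p := r / (r + 1) with hp
  set q := 1 / (r + 1) with hq
  have hpq : p + q = 1 := by rw [hp, hq]; field_simp
  have hp0 : 0 < p := by positivity
  rcases hM.eq_or_lt with hM0 | hM0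
  · -- M = 0
    have hMp : M ^ p = 0 := by rw [← hM0, Real.zero_rpow hp0.ne']
    rw [hMp]
    have hA0 : A ≤ 0 := by
      refine le_of_forall_pos_le_add fun ε hε => ?_
      set h := (ε / V) ^ (1 / r) with hh
      have hεV : 0 < ε / V := by positivity
      have hhpos : 0 < h := Real.rpow_pos_of_pos hεV _
      have hhr : h ^ r = ε / V := by
        rw [hh, ← Real.rpow_mul hεV.le, one_div_mul_cancel hr0.ne', Real.rpow_one]
      have := hA h hhpos
      rw [← hM0, hhr] at this
      have : A ≤ V * (ε / V) := by simpa using this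
      rw [mul_div_cancel₀ _ hV.ne'] at this
      linarith
    have : (0:ℝ) ≤ 2 ^ p * (r + 1) / r ^ p * 0 * V ^ q := by
      rw [mul_zero, zero_mul]
    linarith [hA0, this]
  · -- 0 < M
    set K := 2 * M / (r * V) with hK
    have hKpos : 0 < K := by positivity
    set h := K ^ q with hh
    have hhpos : 0 < h := Real.rpow_pos_of_pos hKpos _
    have key := hA h hhpos
    have h2M : 2 * M = K * (r * V) := by rw [hK]; field_simp
    have hKq : K / K ^ q = K ^ p := by
      nth_rewrite 1 [← Real.rpow_one K]
      rw [← Real.rpow_sub hKpos]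
      congr 1
      rw [hq, hp]; field_simp; ring
    have ht1 : 2 * M / h = K ^ p * (r * V) := by
      rw [h2M, hh, mul_comm K (r * V), mul_div_assoc, hKq, mul_comm]
    have ht2 : h ^ r = K ^ p := by
      rw [hh, ← Real.rpow_mul hKpos.le]
      congr 1
      rw [hq, hp]; ring
    rw [ht1, ht2] at key
    have key2 : A ≤ K ^ p * V * (r + 1) := by nlinarith [key]
    refine key2.trans_eq ?_
    have hKp : K ^ p = 2 ^ p * M ^ p / (r ^ p * V ^ p) := by
      rw [hK, Real.div_rpow (by positivity) (by positivity),
        Real.mul_rpow (by norm_num) hM0.le, Real.mul_rpow hr0.le hV.le]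
    have hVp : (0:ℝ) < V ^ p := Real.rpow_pos_of_pos hV _
    have hVq : V ^ q = V / V ^ p := by
      rw [eq_div_iff hVp.ne', ← Real.rpow_add hV]
      rw [show q + p = 1 by rw [add_comm]; exact hpq, Real.rpow_one]
    rw [hKp, hVq]
    have hrp : (0:ℝ) < r ^ p := Real.rpow_pos_of_pos hr0 _
    field_simp

/-- **Theorem 3.** Let `J` be an unbounded interval of `ℝ` and `g : J → ℝ` locally absolutely
continuous with derivative `g'`. If `g ∈ L^∞(J)`, `g'` is of locally bounded variation and its
variation on any subinterval with endpoints `a, b ∈ J` is `≤ V |a-b|^r` with `V > 0`,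
`r ∈ (0,1]`, then `g' ∈ L^∞(J)` and
`‖g'‖_{J,∞} ≤ (2^{r/(r+1)} (r+1)/r^{r/(r+1)}) ‖g‖_{J,∞}^{r/(r+1)} V^{1/(r+1)}`. -/
theorem landau_sup_norm_of_variation_bound
    (J : Set ℝ) (hJ : J.OrdConnected) (hJu : ¬ Bornology.IsBounded J)
    (g g' : ℝ → ℝ) (hderiv : ∀ x ∈ J, HasDerivWithinAt g (g' x) J x)
    (hg : MemLp g ⊤ (volume.restrict J))
    (hbv : ∀ a ∈ J, ∀ b ∈ J, BoundedVariationOn g' (uIcc a b))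
    (V r : ℝ) (hV : 0 < V) (hr : r ∈ Ioc (0 : ℝ) 1)
    (hvar : ∀ a ∈ J, ∀ b ∈ J,
      eVariationOn g' (uIcc a b) ≤ ENNReal.ofReal (V * |a - b| ^ r)) :
    MemLp g' ⊤ (volume.restrict J) ∧
      (eLpNorm g' ⊤ (volume.restrict J)).toReal ≤
        2 ^ (r / (r + 1)) * (r + 1) / r ^ (r / (r + 1)) *
          (eLpNorm g ⊤ (volume.restrict J)).toReal ^ (r / (r + 1)) *
            V ^ (1 / (r + 1)) := by
  obtain ⟨hr0, hr1⟩ := hr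
  have hJmeas : MeasurableSet J := hJ.measurableSet
  set M := (eLpNorm g ⊤ (volume.restrict J)).toReal with hM
  have hM0 : 0 ≤ M := ENNReal.toReal_nonneg
  -- a.e. bound on g
  have haefull : ∀ᵐ y ∂(volume.restrict J), ‖g y‖ ≤ M := by
    have h1 : ∀ᵐ y ∂(volume.restrict J),
        (‖g y‖₊ : ENNReal) ≤ eLpNormEssSup g (volume.restrict J) := ae_le_eLpNormEssSup
    have hfin : eLpNormEssSup g (volume.restrict J) ≠ ⊤ := by
      rw [← eLpNorm_exponent_top]; exact hg.2.ne
    filter_upwards [h1] with y hy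
    have h2 := ENNReal.toReal_mono hfin hy
    simpa [hM, eLpNorm_exponent_top] using h2
  -- from unboundedness: in each direction one can move by h inside J
  have hdir : ∀ x ∈ J, ∀ h : ℝ, 0 < h → ∃ y ∈ J, uIcc x y ⊆ J ∧ |y - x| = h := by
    intro x hx h hh
    rw [isBounded_iff_bddBelow_bddAbove, not_and_or] at hJu
    rcases hJu with hA | hA
    · have : ∃ z ∈ J, z < x - h := by
        by_contra hc; push_neg at hc
        exact hA ⟨x - h, fun z hz => hc z hz⟩
      obtain ⟨z, hz, hzlt⟩ := this
      have hyJ : x - h ∈ J := hJ.out hz hx ⟨hzlt.le, by linarith⟩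
      exact ⟨x - h, hyJ, hJ.uIcc_subset hx hyJ,
        by rw [show x - h - x = -h by ring, abs_neg, abs_of_pos hh]⟩
    · have : ∃ z ∈ J, x + h < z := by
        by_contra hc; push_neg at hc
        exact hA ⟨x + h, fun z hz => hc z hz⟩
      obtain ⟨z, hz, hzlt⟩ := this
      have hyJ : x + h ∈ J := hJ.out hx hz ⟨by linarith, hzlt.le⟩
      exact ⟨x + h, hyJ, hJ.uIcc_subset hx hyJ,
        by rw [show x + h - x = h by ring, abs_of_pos hh]⟩
  -- pointwise bound on g
  have hgle : ∀ x ∈ J, |g x| ≤ M := by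
    intro x hx
    by_contra hlt
    push_neg at hlt
    have hcont : ContinuousWithinAt g J x := (hderiv x hx).continuousWithinAt
    obtain ⟨δ, hδ, hδ'⟩ := Metric.continuousWithinAt_iff.mp hcont (|g x| - M) (by linarith)
    obtain ⟨y, hy, hsub, hyx⟩ := hdir x hx (δ/2) (by positivity)
    have hball : ∀ z ∈ uIcc x y, M < ‖g z‖ := by
      intro z hz
      have hzJ := hsub hz
      have hz1 : |z - x| ≤ |y - x| := by
        rw [abs_sub_le_iff]
        rcases le_total x y with hxy | hxy
        · rw [uIcc_of_le hxy] at hz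
          constructor <;> [skip; skip] <;>
            · rw [abs_of_nonneg (by linarith [hz.1, hz.2] : (0:ℝ) ≤ y - x)]
              cases hz with | intro h1 h2 => linarith
        · rw [uIcc_of_ge hxy] at hz
          constructor <;>
            · rw [abs_of_nonpos (by linarith : y - x ≤ 0)]
              cases hz with | intro h1 h2 => linarith
      have hdist : dist z x < δ := by
        rw [Real.dist_eq]; rw [hyx] at hz1; linarith
      have h3 := hδ' hzJ hdist
      rw [Real.dist_eq] at h3
      have h4 := abs_sub_abs_le_abs_sub (g x) (g z)
      rw [abs_sub_comm (g x) (g z)] at h4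
      rw [Real.norm_eq_abs]
      linarith
    have hbadnull : (volume.restrict J) {z | ¬ ‖g z‖ ≤ M} = 0 := by
      rw [← ae_iff]; exact haefull
    have hle : (volume.restrict J) (uIcc x y) = 0 := by
      refine measure_mono_null (fun z hz => ?_) hbadnull
      exact not_le.mpr (hball z hz)
    rw [Measure.restrict_apply' hJmeas, inter_eq_self_of_subset_left hsub] at hle
    have hsm : x ⊔ y - x ⊓ y = |y - x| := by
      rcases le_total x y with h' | h'
      · rw [max_eq_right h', min_eq_left h',
          abs_of_nonneg (by linarith)]
      · rw [max_eq_left h', min_eq_right h',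
          abs_of_nonpos (by linarith)]
        ring
    have hpos : (0:ENNReal) < volume (uIcc x y) := by
      rw [Set.uIcc, Real.volume_Icc, hsm, hyx]
      exact ENNReal.ofReal_pos.mpr (by positivity)
    rw [hle] at hpos; exact lt_irrefl _ hpos
  -- key Landau estimate
  have hkey : ∀ x ∈ J, ∀ h : ℝ, 0 < h → |g' x| ≤ 2 * M / h + V * h ^ r := by
    intro x hx h hh
    obtain ⟨y, hy, hsub, hyx⟩ := hdir x hx h hh
    set s := uIcc x y with hs
    have hxs : x ∈ s := left_mem_uIcc
    have hys : y ∈ s := right_mem_uIcc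
    have hbound : ∀ t ∈ s, ‖g' t - g' x‖ ≤ V * h ^ r := by
      intro t ht
      have h1 : edist (g' t) (g' x) ≤ eVariationOn g' s := eVariationOn.edist_le g' ht hxs
      have h2 := h1.trans (hvar x hx y hy)
      have habs : |x - y| = h := by rw [abs_sub_comm]; exact hyx
      rw [habs, edist_dist] at h2
      have h3 := (ENNReal.ofReal_le_ofReal_iff (by positivity)).mp h2
      rw [Real.dist_eq] at h3
      rwa [Real.norm_eq_abs]
    have hderivs : ∀ t ∈ s, HasDerivWithinAt (fun t => g t - g' x * t) (g' t - g' x) s t := by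
      intro t ht
      have hlin : HasDerivWithinAt (fun t : ℝ => g' x * t) (g' x) s t := by
        simpa using ((hasDerivAt_id t).const_mul (g' x)).hasDerivWithinAt
      exact ((hderiv t (hsub ht)).mono hsub).sub hlin
    have hMVT := (convex_uIcc x y).norm_image_sub_le_of_norm_hasDerivWithin_le
      hderivs hbound hxs hys
    simp only [Real.norm_eq_abs] at hMVT
    rw [hyx] at hMVT
    have hgx : |g x| ≤ M := hgle x hx
    have hgy : |g y| ≤ M := hgle y hy
    have hsplit : g' x * (y - x) = (g y - g x) - ((g y - g' x * y) - (g x - g' x * x)) := by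
      ring
    have hmain : |g' x| * h ≤ 2 * M + V * h ^ r * h := by
      have e1 : |g' x * (y - x)| = |g' x| * h := by rw [abs_mul, hyx]
      have e2 : |g' x * (y - x)| ≤ |g y - g x| + |(g y - g' x * y) - (g x - g' x * x)| := by
        rw [hsplit]; exact abs_sub _ _
      have e3 : |g y - g x| ≤ 2 * M := by
        have := abs_sub _ _ |>.trans (add_le_add hgy hgx)
        calc |g y - g x| ≤ |g y| + |g x| := abs_sub _ _
          _ ≤ M + M := add_le_add hgy hgx
          _ = 2 * M := by ring
      linarith [e1, e2, e3, hMVT]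
    have hdiv : |g' x| ≤ (2 * M + V * h ^ r * h) / h := by
      rw [le_div_iff₀ hh]; exact hmain
    have heq : (2 * M + V * h ^ r * h) / h = 2 * M / h + V * h ^ r := by
      field_simp
    rwa [heq] at hdiv
  -- conclude pointwise bound
  set B := 2 ^ (r / (r + 1)) * (r + 1) / r ^ (r / (r + 1)) * M ^ (r / (r + 1)) *
      V ^ (1 / (r + 1)) with hB
  have hptwise : ∀ x ∈ J, ‖g' x‖ ≤ B := by
    intro x hx
    rw [Real.norm_eq_abs]
    exact landau_opt hM0 hV hr0 (hkey x hx)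
  have hBnn : 0 ≤ B := by
    rw [hB]
    have := hgle
    positivity
  have hae' : ∀ᵐ x ∂(volume.restrict J), ‖g' x‖ ≤ B :=
    (ae_restrict_iff' hJmeas).mpr (ae_of_all _ hptwise)
  -- continuity of g' on J (Hölder)
  have hcont' : ContinuousOn g' J := by
    intro x hx
    rw [ContinuousWithinAt, Metric.tendsto_nhdsWithin_nhds]
    intro ε hε
    refine ⟨(ε / V) ^ (1 / r), Real.rpow_pos_of_pos (by positivity) _, fun {y} hy hd => ?_⟩
    have h1 : edist (g' y) (g' x) ≤ eVariationOn g' (uIcc y x) :=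
      eVariationOn.edist_le g' left_mem_uIcc right_mem_uIcc
    have h2 := h1.trans (hvar y hy x hx)
    rw [edist_dist] at h2
    have h3 := (ENNReal.ofReal_le_ofReal_iff (by positivity)).mp h2
    have h4 : |y - x| ^ r < ((ε / V) ^ (1 / r)) ^ r := by
      refine Real.rpow_lt_rpow (abs_nonneg _) ?_ hr0
      rwa [Real.dist_eq] at hd
    have h5 : ((ε / V : ℝ) ^ (1 / r)) ^ r = ε / V := by
      rw [← Real.rpow_mul (by positivity), one_div_mul_cancel hr0.ne', Real.rpow_one]
    rw [h5] at h4
    have h6 : V * |y - x| ^ r < ε := by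
      have := mul_lt_mul_of_pos_left h4 hV
      rwa [mul_div_cancel₀ _ hV.ne'] at this
    linarith [h3]
  have haemeas : AEStronglyMeasurable g' (volume.restrict J) :=
    hcont'.aestronglyMeasurable hJmeas
  have hbnd := eLpNormEssSup_le_of_ae_bound hae'
  constructor
  · refine ⟨haemeas, ?_⟩
    rw [eLpNorm_exponent_top]
    exact hbnd.trans_lt ENNReal.ofReal_lt_top
  · rw [eLpNorm_exponent_top]
    exact ENNReal.toReal_le_of_le_ofReal hBnn hbnd
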